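/- arXiv:2304.07014 — 2 statements merged into one kernel-verified Lean document; each statement's English description precedes it below -/
import Mathlib

section
/- Let 0 < θ₁ ≤ θ₂, w₁ = (2θ₂ − θ₁)/θ₂, w₂ = (θ₂ − θ₁)/θ₂, and define the MSReLU function ξ(z) = w₁(ReLU(z − θ₁) − ReLU(−z − θ₁)) − w₂(ReLU(z − θ₂) − ReLU(−z − θ₂)). Then for all z ∈ ℝ, |ξ(z)| ≥ |ST_{θ₁}(z)|, where ST_θ(z) = sign(z)·max(|z| − θ, 0) is the soft thresholding function; that is, MSReLU output magnitudes dominate those of soft thresholding with the same lower threshold. -/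
lemma msrelu_key (θ₁ θ₂ : ℝ) (h1 : 0 < θ₁) (h2 : θ₁ ≤ θ₂) (x : ℝ) :
    max (x - θ₁) 0 ≤ (2 * θ₂ - θ₁) / θ₂ * max (x - θ₁) 0
      - (θ₂ - θ₁) / θ₂ * max (x - θ₂) 0 := by
  have hθ₂ : 0 < θ₂ := lt_of_lt_of_le h1 h2
  rcases le_or_gt x θ₁ with h | h
  · rw [max_eq_right (by linarith), max_eq_right (by linarith)]
    simp
  · rcases le_or_gt x θ₂ with h' | h'
    · rw [max_eq_left (by linarith), max_eq_right (by linarith)]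
      have hw : 1 ≤ (2 * θ₂ - θ₁) / θ₂ := by
        rw [le_div_iff₀ hθ₂]; linarith
      nlinarith
    · rw [max_eq_left (by linarith), max_eq_left (by linarith),
        div_mul_eq_mul_div, div_mul_eq_mul_div, ← sub_div, le_div_iff₀ hθ₂]
      nlinarith [sq_nonneg (θ₂ - θ₁)]

/-- MSReLU output magnitudes dominate those of soft thresholding with the same
lower threshold: `|ξ(z)| ≥ |ST_{θ₁}(z)|` for all `z`. -/
theorem stmt16 (θ₁ θ₂ : ℝ) (h1 : 0 < θ₁) (h2 : θ₁ ≤ θ₂)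
    (w₁ w₂ : ℝ) (hw1 : w₁ = (2 * θ₂ - θ₁) / θ₂) (hw2 : w₂ = (θ₂ - θ₁) / θ₂)
    (ξ : ℝ → ℝ)
    (hξ : ∀ z, ξ z = w₁ * (max (z - θ₁) 0 - max (-z - θ₁) 0)
      - w₂ * (max (z - θ₂) 0 - max (-z - θ₂) 0))
    (ST : ℝ → ℝ) (hST : ∀ z, ST z = Real.sign z * max (|z| - θ₁) 0) :
    ∀ z, |ST z| ≤ |ξ z| := by
  intro z
  have hθ₂ : 0 < θ₂ := lt_of_lt_of_le h1 h2
  subst hw1 hw2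
  rcases lt_trichotomy z 0 with hz | hz | hz
  · -- negative case
    have hξz : ξ z = -((2 * θ₂ - θ₁) / θ₂ * max (-z - θ₁) 0
        - (θ₂ - θ₁) / θ₂ * max (-z - θ₂) 0) := by
      rw [hξ z, max_eq_right (by linarith : z - θ₁ ≤ 0),
        max_eq_right (by linarith : z - θ₂ ≤ 0)]
      ring
    have hSTz : ST z = -max (-z - θ₁) 0 := by
      rw [hST z, Real.sign_of_neg hz, abs_of_neg hz]
      ring
    have hkey := msrelu_key θ₁ θ₂ h1 h2 (-z)
    rw [hξz, hSTz, abs_neg, abs_neg, abs_of_nonneg (le_max_right _ _)]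
    calc max (-z - θ₁) 0 ≤ (2 * θ₂ - θ₁) / θ₂ * max (-z - θ₁) 0
          - (θ₂ - θ₁) / θ₂ * max (-z - θ₂) 0 := hkey
      _ ≤ |_| := le_abs_self _
  · -- zero case
    have : ST z = 0 := by rw [hST z, hz, Real.sign_zero, zero_mul]
    rw [this, abs_zero]
    exact abs_nonneg _
  · -- positive case
    have hξz : ξ z = (2 * θ₂ - θ₁) / θ₂ * max (z - θ₁) 0
        - (θ₂ - θ₁) / θ₂ * max (z - θ₂) 0 := by
      rw [hξ z, max_eq_right (by linarith : -z - θ₁ ≤ 0),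
        max_eq_right (by linarith : -z - θ₂ ≤ 0)]
      ring
    have hSTz : ST z = max (z - θ₁) 0 := by
      rw [hST z, Real.sign_of_pos hz, abs_of_pos hz, one_mul]
    have hkey := msrelu_key θ₁ θ₂ h1 h2 z
    rw [hξz, hSTz, abs_of_nonneg (le_max_right _ _)]
    calc max (z - θ₁) 0 ≤ (2 * θ₂ - θ₁) / θ₂ * max (z - θ₁) 0
          - (θ₂ - θ₁) / θ₂ * max (z - θ₂) 0 := hkey
      _ ≤ |_| := le_abs_self _
end

section
/- Let 0 < θ₁ ≤ θ₂, w₁ = (2θ₂ − θ₁)/θ₂, w₂ = (θ₂ − θ₁)/θ₂, and define the MSReLU function ξ(z) = w₁(ReLU(z − θ₁) − ReLU(−z − θ₁)) − w₂(ReLU(z − θ₂) − ReLU(−z − θ₂)). Then ξ is monotone nondecreasing on ℝ. -/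
lemma msrelu_aux (θ₁ θ₂ a b : ℝ) (h2 : θ₁ ≤ θ₂) (hab : a ≤ b) :
    max (a - θ₁) 0 - max (a - θ₂) 0 ≤ max (b - θ₁) 0 - max (b - θ₂) 0 := by
  simp only [max_def]
  split_ifs <;> linarith

lemma msrelu_aux2 (θ₁ a b : ℝ) (h1 : 0 ≤ θ₁) (hab : a ≤ b) :
    max (a - θ₁) 0 - max (-a - θ₁) 0 ≤ max (b - θ₁) 0 - max (-b - θ₁) 0 := by
  simp only [max_def]
  split_ifs <;> linarith

/-- The MSReLU function is monotone nondecreasing on ℝ. -/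
theorem stmt17 (θ₁ θ₂ : ℝ) (h1 : 0 < θ₁) (h2 : θ₁ ≤ θ₂)
    (w₁ w₂ : ℝ) (hw1 : w₁ = (2 * θ₂ - θ₁) / θ₂) (hw2 : w₂ = (θ₂ - θ₁) / θ₂)
    (ξ : ℝ → ℝ)
    (hξ : ∀ z, ξ z = w₁ * (max (z - θ₁) 0 - max (-z - θ₁) 0)
      - w₂ * (max (z - θ₂) 0 - max (-z - θ₂) 0)) :
    Monotone ξ := by
  have hθ2 : 0 < θ₂ := lt_of_lt_of_le h1 h2
  have hw2' : 0 ≤ w₂ := by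
    rw [hw2]; exact div_nonneg (by linarith) hθ2.le
  have hw12 : w₁ = 1 + w₂ := by
    rw [hw1, hw2]; field_simp; ring
  intro a b hab
  rw [hξ a, hξ b]
  have h3 := msrelu_aux2 θ₁ a b h1.le hab
  have h4 := msrelu_aux θ₁ θ₂ a b h2 hab
  have h5 := msrelu_aux θ₁ θ₂ (-b) (-a) h2 (by linarith)
  have h6 : 0 ≤ w₂ * ((max (b - θ₁) 0 - max (-b - θ₁) 0
      - (max (b - θ₂) 0 - max (-b - θ₂) 0))
      - (max (a - θ₁) 0 - max (-a - θ₁) 0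
      - (max (a - θ₂) 0 - max (-a - θ₂) 0))) :=
    mul_nonneg hw2' (by linarith)
  nlinarith [h3, h6]
end
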